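/- The only graphs H (up to isomorphism) such that both H and its complement are disjoint unions of paths and subdivided claws are the six graphs P_1, 2P_1, P_1+P_2, P_2, P_3 and P_4; equivalently, if H and its complement both belong to the class S, then H is an induced subgraph of P_4. -/

import Mathlib

open SimpleGraph

/-- The class 𝒮: every connected component is a path or a subdivided claw.
Equivalently (for finite graphs): the graph is a forest of maximum degree at
most 3 in which no two distinct vertices of degree 3 lie in the same component. -/
def inClassS {V : Type*} (G : SimpleGraph V) : Prop :=
  G.IsAcyclic ∧ (∀ v, (G.neighborSet v).ncard ≤ 3) ∧
    ∀ u v, (G.neighborSet u).ncard = 3 → (G.neighborSet v).ncard = 3 →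
      G.Reachable u v → u = v

section Aux

variable {V : Type*} {G : SimpleGraph V}

/-- In an acyclic graph, a triangle is impossible. -/
lemma aux_no_triangle (hG : G.IsAcyclic) {a b c : V}
    (hab : G.Adj a b) (hbc : G.Adj b c) (hca : G.Adj c a) : False := by
  refine hG (Walk.cons hab (Walk.cons hbc (Walk.cons hca Walk.nil))) ?_
  rw [Walk.isCycle_def]
  have h1 := hab.ne; have h2 := hbc.ne; have h3 := hca.ne
  have h1' := hab.ne'; have h2' := hbc.ne'; have h3' := hca.ne'
  refine ⟨?_, by simp, ?_⟩
  · rw [Walk.isTrail_def]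
    simp [Sym2.eq_iff]
    tauto
  · simp
    tauto

/-- In an acyclic graph, a 4-cycle is impossible. -/
lemma aux_no_square (hG : G.IsAcyclic) {a b c d : V} (hac : a ≠ c) (hbd : b ≠ d)
    (hab : G.Adj a b) (hbc : G.Adj b c) (hcd : G.Adj c d) (hda : G.Adj d a) : False := by
  refine hG (Walk.cons hab (Walk.cons hbc (Walk.cons hcd (Walk.cons hda Walk.nil)))) ?_
  rw [Walk.isCycle_def]
  have h1 := hab.ne; have h2 := hbc.ne; have h3 := hcd.ne; have h4 := hda.ne
  have h1' := hab.ne'; have h2' := hbc.ne'; have h3' := hcd.ne'; have h4' := hda.ne'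
  refine ⟨?_, by simp, ?_⟩
  · rw [Walk.isTrail_def]
    simp [Sym2.eq_iff]
    tauto
  · simp
    tauto

/-- Root of the connected component of a vertex. -/
noncomputable def groot (G : SimpleGraph V) (v : V) : V :=
  (G.connectedComponentMk v).out

lemma groot_reachable (G : SimpleGraph V) (v : V) : G.Reachable (groot G v) v :=
  (SimpleGraph.ConnectedComponent.eq).mp (Quot.out_eq _)

lemma groot_eq_of_reachable {u v : V} (h : G.Reachable u v) : groot G u = groot G v :=
  congrArg Quot.out (SimpleGraph.ConnectedComponent.sound h)

lemma groot_idem (G : SimpleGraph V) (v : V) : groot G (groot G v) = groot G v :=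
  groot_eq_of_reachable (groot_reachable G v)

/-- In an acyclic graph, two adjacent vertices have different distances to any
vertex reaching them. -/
lemma aux_dist_ne (hG : G.IsAcyclic) {r u v : V} (hr : G.Reachable r u)
    (ha : G.Adj u v) : G.dist r u ≠ G.dist r v := by
  classical
  intro heq
  have hrv : G.Reachable r v := hr.trans ha.reachable
  obtain ⟨p, hp, hpl⟩ := hr.exists_path_of_dist
  obtain ⟨q, hq, hql⟩ := hrv.exists_path_of_dist
  have hvp : v ∉ p.support := by
    intro hv
    have h1 : (p.takeUntil v hv).length + (p.dropUntil v hv).length = p.length := by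
      rw [← Walk.length_append, Walk.take_spec]
    have h2 : (p.dropUntil v hv).length ≠ 0 := by
      intro h0
      exact ha.ne' (Walk.eq_of_length_eq_zero h0)
    have h3 := G.dist_le (p.takeUntil v hv)
    omega
  have hP : (p.concat ha).IsPath := by
    rw [← Walk.isPath_reverse_iff, Walk.reverse_concat]
    exact (hp.reverse).cons (by simpa using hvp)
  have heqp := hG.path_unique ⟨p.concat ha, hP⟩ ⟨q, hq⟩
  have hlen : (p.concat ha).length = q.length := congrArg Walk.length (congrArg Subtype.val heqp)
  rw [Walk.length_concat, hpl, hql] at hlen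
  omega

/-- In an acyclic graph, distances of adjacent vertices to a common ancestor
differ by exactly one. -/
lemma aux_adj_dist (hG : G.IsAcyclic) {r u v : V} (hr : G.Reachable r u)
    (ha : G.Adj u v) :
    G.dist r v = G.dist r u + 1 ∨ G.dist r u = G.dist r v + 1 := by
  have hrv : G.Reachable r v := hr.trans ha.reachable
  obtain ⟨p, _, hpl⟩ := hr.exists_path_of_dist
  obtain ⟨q, _, hql⟩ := hrv.exists_path_of_dist
  have h1 : G.dist r v ≤ G.dist r u + 1 := by
    have := G.dist_le (p.concat ha)
    rwa [Walk.length_concat, hpl] at this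
  have h2 : G.dist r u ≤ G.dist r v + 1 := by
    have := G.dist_le (q.concat ha.symm)
    rwa [Walk.length_concat, hql] at this
  have h3 := aux_dist_ne hG hr ha
  omega

/-- In an acyclic graph, the "parent" of a vertex (its neighbor closer to the
root) is unique. -/
lemma aux_parent_unique (hG : G.IsAcyclic) {r x u1 u2 : V}
    (h1 : G.Adj u1 x) (h2 : G.Adj u2 x)
    (hr1 : G.Reachable r u1) (hr2 : G.Reachable r u2)
    (d1 : G.dist r u1 + 1 = G.dist r x) (d2 : G.dist r u2 + 1 = G.dist r x) :
    u1 = u2 := by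
  classical
  obtain ⟨p1, hp1, hl1⟩ := hr1.exists_path_of_dist
  obtain ⟨p2, hp2, hl2⟩ := hr2.exists_path_of_dist
  have hx1 : x ∉ p1.support := by
    intro hv
    have ht := G.dist_le (p1.takeUntil x hv)
    have hle := Walk.length_takeUntil_le p1 hv
    omega
  have hx2 : x ∉ p2.support := by
    intro hv
    have ht := G.dist_le (p2.takeUntil x hv)
    have hle := Walk.length_takeUntil_le p2 hv
    omega
  have hP1 : (p1.concat h1).IsPath := by
    rw [← Walk.isPath_reverse_iff, Walk.reverse_concat]
    exact (hp1.reverse).cons (by simpa using hx1)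
  have hP2 : (p2.concat h2).IsPath := by
    rw [← Walk.isPath_reverse_iff, Walk.reverse_concat]
    exact (hp2.reverse).cons (by simpa using hx2)
  have heqp := hG.path_unique ⟨p1.concat h1, hP1⟩ ⟨p2.concat h2, hP2⟩
  have hw : p1.concat h1 = p2.concat h2 := congrArg Subtype.val heqp
  have := congrArg (fun w : G.Walk r x => w.reverse.getVert 1) hw
  simpa [Walk.reverse_concat, Walk.getVert_cons_succ, Walk.getVert_zero] using this

/-- A finite forest has at most `card V - 1` edges. -/
lemma aux_forest_bound [Fintype V] [DecidableEq V] [DecidableRel G.Adj]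
    (hG : G.IsAcyclic) (hV : Nonempty V) :
    G.edgeFinset.card + 1 ≤ Fintype.card V := by
  classical
  obtain ⟨v0⟩ := hV
  set r0 := groot G v0 with hr0
  set P : Sym2 V → V → Prop := fun e x => ∃ y, G.Adj y x ∧ e = s(y, x) ∧
    G.dist (groot G x) y + 1 = G.dist (groot G x) x with hP
  have exP : ∀ e ∈ G.edgeFinset, ∃ x, P e x := by
    intro e he
    revert he
    refine Sym2.ind (fun u v => ?_) e
    intro he
    rw [mem_edgeFinset, mem_edgeSet] at he
    have hru : G.Reachable (groot G u) u := groot_reachable G u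
    have hgu : groot G v = groot G u := (groot_eq_of_reachable he.reachable).symm
    rcases aux_adj_dist (G := G) ‹G.IsAcyclic› hru he with h | h
    · exact ⟨v, u, he, rfl, by rw [hgu]; omega⟩
    · exact ⟨u, v, he.symm, Sym2.eq_swap, by omega⟩
  let f : Sym2 V → V := fun e => if h : ∃ x, P e x then h.choose else v0
  have hfP : ∀ e ∈ G.edgeFinset, P e (f e) := by
    intro e he
    have h := exP e he
    simp only [f, dif_pos h]
    exact h.choose_spec
  have hf_ne : ∀ e ∈ G.edgeFinset, f e ≠ r0 := by
    intro e he hcon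
    obtain ⟨y, hadj, hey, hd⟩ := hfP e he
    have hg : groot G (f e) = f e := by rw [hcon, hr0]; exact groot_idem G v0
    rw [hg] at hd
    rw [SimpleGraph.dist_self] at hd
    omega
  have hinj : Set.InjOn f G.edgeFinset := by
    intro e1 h1 e2 h2 hfe
    obtain ⟨y1, a1, hey1, hd1⟩ := hfP e1 h1
    obtain ⟨y2, a2, hey2, hd2⟩ := hfP e2 h2
    rw [hfe] at hey1 hd1 a1
    by_cases hy : y1 = y2
    · rw [hey1, hy]; exact hey2.symm
    · exfalso
      apply hy
      have hrx : G.Reachable (groot G (f e2)) (f e2) := groot_reachable G (f e2)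
      exact aux_parent_unique ‹G.IsAcyclic› a1 a2
        (hrx.trans a1.symm.reachable) (hrx.trans a2.symm.reachable) hd1 hd2
  have hcard : G.edgeFinset.card ≤ (Finset.univ.erase r0).card := by
    apply Finset.card_le_card_of_injOn f
    · intro e he
      exact Finset.mem_erase.mpr ⟨hf_ne e he, Finset.mem_univ _⟩
    · exact fun a ha b hb => hinj (by simpa using ha) (by simpa using hb)
  rw [Finset.card_erase_of_mem (Finset.mem_univ _), Finset.card_univ] at hcard
  have : 1 ≤ Fintype.card V := Fintype.card_pos_iff.mpr ⟨v0⟩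
  omega

/-- Edge counts of a graph and its complement add up to `n.choose 2`. -/
lemma aux_edge_sum [Fintype V] [DecidableEq V] [DecidableRel G.Adj] :
    G.edgeFinset.card + Gᶜ.edgeFinset.card = (Fintype.card V).choose 2 := by
  classical
  have hsub : G.edgeFinset ⊆ (⊤ : SimpleGraph V).edgeFinset := by
    intro e he
    rw [mem_edgeFinset] at he ⊢
    revert he
    refine Sym2.ind (fun u v => ?_) e
    intro he
    rw [mem_edgeSet] at he ⊢
    exact he.ne
  have hcompl : Gᶜ.edgeFinset = (⊤ : SimpleGraph V).edgeFinset \ G.edgeFinset := by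
    ext e
    refine Sym2.ind (fun u v => ?_) e
    simp only [Finset.mem_sdiff, mem_edgeFinset, mem_edgeSet, compl_adj, top_adj]
  rw [hcompl, Finset.card_sdiff_of_subset hsub, ← card_edgeFinset_top_eq_card_choose_two]
  have := Finset.card_le_card hsub
  omega

end Aux

/-- Adjacency relation of the path `P₄` as a boolean function. -/
def p4adj (a b : Fin 4) : Bool := (a.val + 1 == b.val) || (b.val + 1 == a.val)

/-- A symmetric irreflexive adjacency on 4 vertices determined by 6 bits. -/
def adj4 (b : Fin 6 → Bool) (i j : Fin 4) : Bool :=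
  match i, j with
  | 0,1 => b 0 | 1,0 => b 0
  | 0,2 => b 1 | 2,0 => b 1
  | 0,3 => b 2 | 3,0 => b 2
  | 1,2 => b 3 | 2,1 => b 3
  | 1,3 => b 4 | 3,1 => b 4
  | 2,3 => b 5 | 3,2 => b 5
  | _,_ => false

set_option maxHeartbeats 4000000 in
set_option synthInstance.maxSize 40000 in
set_option synthInstance.maxHeartbeats 4000000 in
set_option maxRecDepth 100000 in
theorem key4 : ∀ b : Fin 6 → Bool,
    (∀ a c d : Fin 4, a ≠ c → a ≠ d → c ≠ d →
      ¬(adj4 b a c = true ∧ adj4 b c d = true ∧ adj4 b d a = true)) →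
    (∀ a c d : Fin 4, a ≠ c → a ≠ d → c ≠ d →
      ¬(adj4 b a c = false ∧ adj4 b c d = false ∧ adj4 b d a = false)) →
    (∀ a c d f : Fin 4, a ≠ c → a ≠ d → a ≠ f → c ≠ d → c ≠ f → d ≠ f →
      ¬(adj4 b a c = true ∧ adj4 b c d = true ∧ adj4 b d f = true ∧ adj4 b f a = true)) →
    (∀ a c d f : Fin 4, a ≠ c → a ≠ d → a ≠ f → c ≠ d → c ≠ f → d ≠ f →
      ¬(adj4 b a c = false ∧ adj4 b c d = false ∧ adj4 b d f = false ∧ adj4 b f a = false)) →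
    ∃ g : Fin 4 → Fin 4, (∀ i j : Fin 4, i ≠ j → g i ≠ g j) ∧
      ∀ i j, adj4 b i j = p4adj (g i) (g j) := by decide

set_option maxHeartbeats 4000000 in
set_option synthInstance.maxSize 40000 in
set_option synthInstance.maxHeartbeats 4000000 in
set_option maxRecDepth 100000 in
theorem keyAll (n : ℕ) (hn : n ≤ 4) : ∀ A : Fin n → Fin n → Bool,
    (∀ i j, A i j = A j i) →
    (∀ i, A i i = false) →
    (∀ a b c : Fin n, a ≠ b → a ≠ c → b ≠ c →
      ¬(A a b = true ∧ A b c = true ∧ A c a = true)) →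
    (∀ a b c : Fin n, a ≠ b → a ≠ c → b ≠ c →
      ¬(A a b = false ∧ A b c = false ∧ A c a = false)) →
    (∀ a b c d : Fin n, a ≠ b → a ≠ c → a ≠ d → b ≠ c → b ≠ d → c ≠ d →
      ¬(A a b = true ∧ A b c = true ∧ A c d = true ∧ A d a = true)) →
    (∀ a b c d : Fin n, a ≠ b → a ≠ c → a ≠ d → b ≠ c → b ≠ d → c ≠ d →
      ¬(A a b = false ∧ A b c = false ∧ A c d = false ∧ A d a = false)) →
    ∃ g : Fin n → Fin 4, (∀ i j : Fin n, i ≠ j → g i ≠ g j) ∧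
      ∀ i j, A i j = p4adj (g i) (g j) := by
  interval_cases n
  · decide
  · decide
  · decide
  · decide
  · intro A hs hi h3 hc3 h4 hc4
    have hA : A = adj4 (fun k => match k with
      | 0 => A 0 1 | 1 => A 0 2 | 2 => A 0 3 | 3 => A 1 2 | 4 => A 1 3 | 5 => A 2 3) := by
      funext i j
      fin_cases i <;> fin_cases j <;>
        first
          | rfl
          | exact hi _
          | exact hs _ _
    rw [hA] at h3 hc3 h4 hc4
    obtain ⟨g, hg1, hg2⟩ := key4 _ h3 hc3 h4 hc4
    exact ⟨g, hg1, fun i j => by rw [hA]; exact hg2 i j⟩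

theorem statement_4 {V : Type*} [Fintype V] (H : SimpleGraph V)
    (h1 : inClassS H) (h2 : inClassS Hᶜ) :
    Nonempty (H ↪g SimpleGraph.pathGraph 4) := by
  classical
  obtain ⟨hHa, -, -⟩ := h1
  obtain ⟨hCa, -, -⟩ := h2
  -- Step 1 : at most 4 vertices
  have hn : Fintype.card V ≤ 4 := by
    by_contra hlt
    push_neg at hlt
    have hne : Nonempty V := Fintype.card_pos_iff.mp (by omega)
    have b1 := aux_forest_bound (G := H) hHa hne
    have b2 := aux_forest_bound (G := Hᶜ) hCa hne
    have hsum := aux_edge_sum (G := H)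
    set n := Fintype.card V with hndef
    rw [Nat.choose_two_right] at hsum
    have h5 : 5 * (n - 1) ≤ n * (n - 1) := Nat.mul_le_mul_right _ (by omega)
    generalize hm : n * (n - 1) = m at hsum h5
    omega
  -- Step 2 : transfer to `Fin n` and decide
  set n := Fintype.card V with hndef
  let e : V ≃ Fin n := Fintype.equivFin V
  let A : Fin n → Fin n → Bool := fun i j => decide (H.Adj (e.symm i) (e.symm j))
  have hA : ∀ i j, A i j = true ↔ H.Adj (e.symm i) (e.symm j) := by
    intro i j; simp [A]
  have hAc : ∀ i j, A i j = false ↔ ¬ H.Adj (e.symm i) (e.symm j) := by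
    intro i j; simp [A]
  have hnes : ∀ {i j : Fin n}, i ≠ j → e.symm i ≠ e.symm j := by
    intro i j hij h
    exact hij (e.symm.injective h)
  obtain ⟨g, hg1, hg2⟩ := keyAll n hn A
    (fun i j => by simp [A, SimpleGraph.adj_comm])
    (fun i => by simp [A])
    (fun a b c hab hac hbc ⟨x1, x2, x3⟩ =>
      aux_no_triangle hHa ((hA _ _).mp x1) ((hA _ _).mp x2) ((hA _ _).mp x3))
    (fun a b c hab hac hbc ⟨x1, x2, x3⟩ =>
      aux_no_triangle hCa ⟨hnes hab, (hAc _ _).mp x1⟩ ⟨hnes hbc, (hAc _ _).mp x2⟩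
        ⟨hnes hac.symm, (hAc _ _).mp x3⟩)
    (fun a b c d hab hac had hbc hbd hcd ⟨x1, x2, x3, x4⟩ =>
      aux_no_square hHa (hnes hac) (hnes hbd) ((hA _ _).mp x1) ((hA _ _).mp x2)
        ((hA _ _).mp x3) ((hA _ _).mp x4))
    (fun a b c d hab hac had hbc hbd hcd ⟨x1, x2, x3, x4⟩ =>
      aux_no_square hCa (hnes hac) (hnes hbd) ⟨hnes hab, (hAc _ _).mp x1⟩
        ⟨hnes hbc, (hAc _ _).mp x2⟩ ⟨hnes hcd, (hAc _ _).mp x3⟩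
        ⟨hnes (Ne.symm had), (hAc _ _).mp x4⟩)
  refine ⟨⟨⟨fun v => g (e v), ?_⟩, ?_⟩⟩
  · intro x y hxy
    by_contra hne
    exact hg1 (e x) (e y) (fun h => hne (e.injective h)) hxy
  · intro x y
    rw [SimpleGraph.pathGraph_adj]
    have hx := hg2 (e x) (e y)
    constructor
    · intro hadj
      have : p4adj (g (e x)) (g (e y)) = true := by
        simp [p4adj]
        omega
      rw [← hx] at this
      have := (hA _ _).mp this
      simpa using this
    · intro hadj
      have : A (e x) (e y) = true := (hA _ _).mpr (by simpa using hadj)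
      rw [hx] at this
      simp [p4adj] at this
      omega
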